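/- Write e(u) := exp(2π√(−1)·u) for u ∈ ℂ. Let c0, c1, c2, c3, c4, c5 be complex numbers with c0+c1+c2+c3+c4+c5 = 0 and 4c_j ∉ ℤ for all j = 0, 1, 2, 3, 4, 5. Then the 8×8 block-diagonal complex matrix H = (1/2)·diag(H(1), H(−1)) is invertible, where H(1) is the 4×4 matrix with diagonal entries (1−e(2c_{j-1}+2c_j))/((1−e(2c_{j-1}))(1−e(2c_j))) for consecutive pairs (c0,c1), (c1,c2), (c2,c3), (c3,c4), superdiagonal entries 1/(1−e(2c_j)), subdiagonal entries e(2c_j)/(1−e(2c_j)) (j = 1, 2, 3) and zeros elsewhere, and H(−1) is obtained from H(1) by replacing e(2c_j) with −e(2c_j) everywhere. -/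

import Mathlib

open Matrix Complex

set_option maxHeartbeats 1000000

private lemma exp_ne_pm_one {c : ℂ} (h : ∀ n : ℤ, 4*c ≠ (n : ℂ)) :
    Complex.exp (2*Real.pi*I*(2*c)) ≠ 1 ∧ Complex.exp (2*Real.pi*I*(2*c)) ≠ -1 := by
  have hsq : Complex.exp (2*Real.pi*I*(2*c)) ^ 2 ≠ 1 := by
    rw [← Complex.exp_nat_mul]
    intro hone
    obtain ⟨n, hn⟩ := Complex.exp_eq_one_iff.mp hone
    apply h n
    have h2pi : (2 * (Real.pi : ℂ) * I) ≠ 0 := by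
      simp [Real.pi_ne_zero, Complex.I_ne_zero]
    apply mul_left_cancel₀ h2pi
    rw [show (2*(Real.pi:ℂ)*I) * (4*c) = (2:ℕ) * (2*Real.pi*I*(2*c)) by push_cast; ring, hn]
    ring
  constructor
  · intro he; exact hsq (by rw [he]; ring)
  · intro he; exact hsq (by rw [he]; ring)

private lemma blockA_det_ne (a0 a1 a2 a3 a4 : ℂ)
    (g0 : 1 - a0 ≠ 0) (g1 : 1 - a1 ≠ 0) (g2 : 1 - a2 ≠ 0) (g3 : 1 - a3 ≠ 0)
    (g4 : 1 - a4 ≠ 0) (hP : 1 - a0*a1*a2*a3*a4 ≠ 0) :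
    (!![(1-a0*a1)/((1-a0)*(1-a1)), 1/(1-a1), 0, 0;
        a1/(1-a1), (1-a1*a2)/((1-a1)*(1-a2)), 1/(1-a2), 0;
        0, a2/(1-a2), (1-a2*a3)/((1-a2)*(1-a3)), 1/(1-a3);
        0, 0, a3/(1-a3), (1-a3*a4)/((1-a3)*(1-a4))] : Matrix (Fin 4) (Fin 4) ℂ).det ≠ 0 := by
  intro hdet
  have hDM : (Matrix.diagonal ![(1-a0)*(1-a1),(1-a1)*(1-a2),(1-a2)*(1-a3),(1-a3)*(1-a4)]) *
      (!![(1-a0*a1)/((1-a0)*(1-a1)), 1/(1-a1), 0, 0;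
        a1/(1-a1), (1-a1*a2)/((1-a1)*(1-a2)), 1/(1-a2), 0;
        0, a2/(1-a2), (1-a2*a3)/((1-a2)*(1-a3)), 1/(1-a3);
        0, 0, a3/(1-a3), (1-a3*a4)/((1-a3)*(1-a4))] : Matrix (Fin 4) (Fin 4) ℂ) =
      !![1-a0*a1, 1-a0, 0, 0;
         a1*(1-a2), 1-a1*a2, 1-a1, 0;
         0, a2*(1-a3), 1-a2*a3, 1-a2;
         0, 0, a3*(1-a4), 1-a3*a4] := by
    ext i j
    fin_cases i <;> fin_cases j <;>
      (try simp [Matrix.diagonal_mul, Matrix.vecHead, Matrix.vecTail]) <;>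
      (try field_simp) <;> (try ring)
  have key := congrArg Matrix.det hDM
  rw [Matrix.det_mul, hdet, mul_zero] at key
  have hT : (!![1-a0*a1, 1-a0, 0, 0;
         a1*(1-a2), 1-a1*a2, 1-a1, 0;
         0, a2*(1-a3), 1-a2*a3, 1-a2;
         0, 0, a3*(1-a4), 1-a3*a4] : Matrix (Fin 4) (Fin 4) ℂ).det =
      (1 - a0*a1*a2*a3*a4)*((1-a1)*(1-a2)*(1-a3)) := by
    simp [Matrix.det_succ_row_zero, Fin.sum_univ_succ, Fin.succAbove,
      Matrix.vecHead, Matrix.vecTail]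
    ring
  rw [hT] at key
  exact mul_ne_zero hP (mul_ne_zero (mul_ne_zero g1 g2) g3) key.symm

private lemma blockB_det_ne (a0 a1 a2 a3 a4 : ℂ)
    (k0 : 1 + a0 ≠ 0) (k1 : 1 + a1 ≠ 0) (k2 : 1 + a2 ≠ 0) (k3 : 1 + a3 ≠ 0)
    (k4 : 1 + a4 ≠ 0) (hP : 1 + a0*a1*a2*a3*a4 ≠ 0) :
    (!![(1-a0*a1)/((1+a0)*(1+a1)), 1/(1+a1), 0, 0;
        -a1/(1+a1), (1-a1*a2)/((1+a1)*(1+a2)), 1/(1+a2), 0;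
        0, -a2/(1+a2), (1-a2*a3)/((1+a2)*(1+a3)), 1/(1+a3);
        0, 0, -a3/(1+a3), (1-a3*a4)/((1+a3)*(1+a4))] : Matrix (Fin 4) (Fin 4) ℂ).det ≠ 0 := by
  intro hdet
  have hDM : (Matrix.diagonal ![(1+a0)*(1+a1),(1+a1)*(1+a2),(1+a2)*(1+a3),(1+a3)*(1+a4)]) *
      (!![(1-a0*a1)/((1+a0)*(1+a1)), 1/(1+a1), 0, 0;
        -a1/(1+a1), (1-a1*a2)/((1+a1)*(1+a2)), 1/(1+a2), 0;
        0, -a2/(1+a2), (1-a2*a3)/((1+a2)*(1+a3)), 1/(1+a3);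
        0, 0, -a3/(1+a3), (1-a3*a4)/((1+a3)*(1+a4))] : Matrix (Fin 4) (Fin 4) ℂ) =
      !![1-a0*a1, 1+a0, 0, 0;
         -(a1*(1+a2)), 1-a1*a2, 1+a1, 0;
         0, -(a2*(1+a3)), 1-a2*a3, 1+a2;
         0, 0, -(a3*(1+a4)), 1-a3*a4] := by
    ext i j
    fin_cases i <;> fin_cases j <;>
      (try simp [Matrix.diagonal_mul, Matrix.vecHead, Matrix.vecTail]) <;>
      (try field_simp) <;> (try ring)
  have key := congrArg Matrix.det hDM
  rw [Matrix.det_mul, hdet, mul_zero] at key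
  have hT : (!![1-a0*a1, 1+a0, 0, 0;
         -(a1*(1+a2)), 1-a1*a2, 1+a1, 0;
         0, -(a2*(1+a3)), 1-a2*a3, 1+a2;
         0, 0, -(a3*(1+a4)), 1-a3*a4] : Matrix (Fin 4) (Fin 4) ℂ).det =
      (1 + a0*a1*a2*a3*a4)*((1+a1)*(1+a2)*(1+a3)) := by
    simp [Matrix.det_succ_row_zero, Fin.sum_univ_succ, Fin.succAbove,
      Matrix.vecHead, Matrix.vecTail]
    ring
  rw [hT] at key
  exact mul_ne_zero hP (mul_ne_zero (mul_ne_zero k1 k2) k3) key.symm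


theorem H_invertible (c0 c1 c2 c3 c4 c5 : ℂ)
    (hsum : c0 + c1 + c2 + c3 + c4 + c5 = 0)
    (h0 : ∀ n : ℤ, 4*c0 ≠ (n : ℂ)) (h1 : ∀ n : ℤ, 4*c1 ≠ (n : ℂ))
    (h2 : ∀ n : ℤ, 4*c2 ≠ (n : ℂ)) (h3 : ∀ n : ℤ, 4*c3 ≠ (n : ℂ))
    (h4 : ∀ n : ℤ, 4*c4 ≠ (n : ℂ)) (h5 : ∀ n : ℤ, 4*c5 ≠ (n : ℂ)) :
    IsUnit (((1:ℂ)/2) • Matrix.fromBlocks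
      (!![(1-exp (2*Real.pi*I*(2*c0+2*c1)))/((1-exp (2*Real.pi*I*(2*c0)))*(1-exp (2*Real.pi*I*(2*c1)))),
          1/(1-exp (2*Real.pi*I*(2*c1))), 0, 0;
          exp (2*Real.pi*I*(2*c1))/(1-exp (2*Real.pi*I*(2*c1))),
          (1-exp (2*Real.pi*I*(2*c1+2*c2)))/((1-exp (2*Real.pi*I*(2*c1)))*(1-exp (2*Real.pi*I*(2*c2)))),
          1/(1-exp (2*Real.pi*I*(2*c2))), 0;
          0, exp (2*Real.pi*I*(2*c2))/(1-exp (2*Real.pi*I*(2*c2))),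
          (1-exp (2*Real.pi*I*(2*c2+2*c3)))/((1-exp (2*Real.pi*I*(2*c2)))*(1-exp (2*Real.pi*I*(2*c3)))),
          1/(1-exp (2*Real.pi*I*(2*c3)));
          0, 0, exp (2*Real.pi*I*(2*c3))/(1-exp (2*Real.pi*I*(2*c3))),
          (1-exp (2*Real.pi*I*(2*c3+2*c4)))/((1-exp (2*Real.pi*I*(2*c3)))*(1-exp (2*Real.pi*I*(2*c4))))])
      (0 : Matrix (Fin 4) (Fin 4) ℂ) (0 : Matrix (Fin 4) (Fin 4) ℂ)
      (!![(1-exp (2*Real.pi*I*(2*c0+2*c1)))/((1+exp (2*Real.pi*I*(2*c0)))*(1+exp (2*Real.pi*I*(2*c1)))),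
          1/(1+exp (2*Real.pi*I*(2*c1))), 0, 0;
          -exp (2*Real.pi*I*(2*c1))/(1+exp (2*Real.pi*I*(2*c1))),
          (1-exp (2*Real.pi*I*(2*c1+2*c2)))/((1+exp (2*Real.pi*I*(2*c1)))*(1+exp (2*Real.pi*I*(2*c2)))),
          1/(1+exp (2*Real.pi*I*(2*c2))), 0;
          0, -exp (2*Real.pi*I*(2*c2))/(1+exp (2*Real.pi*I*(2*c2))),
          (1-exp (2*Real.pi*I*(2*c2+2*c3)))/((1+exp (2*Real.pi*I*(2*c2)))*(1+exp (2*Real.pi*I*(2*c3)))),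
          1/(1+exp (2*Real.pi*I*(2*c3)));
          0, 0, -exp (2*Real.pi*I*(2*c3))/(1+exp (2*Real.pi*I*(2*c3))),
          (1-exp (2*Real.pi*I*(2*c3+2*c4)))/((1+exp (2*Real.pi*I*(2*c3)))*(1+exp (2*Real.pi*I*(2*c4))))])) := by
  have hadd : ∀ x y : ℂ, exp (2*Real.pi*I*(x+y)) = exp (2*Real.pi*I*x) * exp (2*Real.pi*I*y) := by
    intro x y; rw [mul_add, Complex.exp_add]
  rw [hadd (2*c0) (2*c1), hadd (2*c1) (2*c2), hadd (2*c2) (2*c3), hadd (2*c3) (2*c4)]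
  set a0 := exp (2*Real.pi*I*(2*c0)) with ha0
  set a1 := exp (2*Real.pi*I*(2*c1)) with ha1
  set a2 := exp (2*Real.pi*I*(2*c2)) with ha2
  set a3 := exp (2*Real.pi*I*(2*c3)) with ha3
  set a4 := exp (2*Real.pi*I*(2*c4)) with ha4
  set a5 := exp (2*Real.pi*I*(2*c5)) with ha5
  obtain ⟨e0, f0⟩ := exp_ne_pm_one h0
  obtain ⟨e1, f1⟩ := exp_ne_pm_one h1
  obtain ⟨e2, f2⟩ := exp_ne_pm_one h2
  obtain ⟨e3, f3⟩ := exp_ne_pm_one h3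
  obtain ⟨e4, f4⟩ := exp_ne_pm_one h4
  obtain ⟨e5, f5⟩ := exp_ne_pm_one h5
  have hprod : a0*a1*a2*a3*a4*a5 = 1 := by
    rw [ha0, ha1, ha2, ha3, ha4, ha5, ← Complex.exp_add, ← Complex.exp_add, ← Complex.exp_add,
      ← Complex.exp_add, ← Complex.exp_add,
      show 2*(Real.pi:ℂ)*I*(2*c0) + 2*Real.pi*I*(2*c1) + 2*Real.pi*I*(2*c2) + 2*Real.pi*I*(2*c3)
        + 2*Real.pi*I*(2*c4) + 2*Real.pi*I*(2*c5) = 2*Real.pi*I*(2*(c0+c1+c2+c3+c4+c5)) by ring,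
      hsum]
    simp
  have g0 : (1:ℂ) - a0 ≠ 0 := fun h => e0 (by linear_combination -h)
  have g1 : (1:ℂ) - a1 ≠ 0 := fun h => e1 (by linear_combination -h)
  have g2 : (1:ℂ) - a2 ≠ 0 := fun h => e2 (by linear_combination -h)
  have g3 : (1:ℂ) - a3 ≠ 0 := fun h => e3 (by linear_combination -h)
  have g4 : (1:ℂ) - a4 ≠ 0 := fun h => e4 (by linear_combination -h)
  have k0 : (1:ℂ) + a0 ≠ 0 := fun h => f0 (by linear_combination h)
  have k1 : (1:ℂ) + a1 ≠ 0 := fun h => f1 (by linear_combination h)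
  have k2 : (1:ℂ) + a2 ≠ 0 := fun h => f2 (by linear_combination h)
  have k3 : (1:ℂ) + a3 ≠ 0 := fun h => f3 (by linear_combination h)
  have k4 : (1:ℂ) + a4 ≠ 0 := fun h => f4 (by linear_combination h)
  have hP1 : (1:ℂ) - a0*a1*a2*a3*a4 ≠ 0 := by
    intro h
    apply e5
    have hm : a0*a1*a2*a3*a4 = 1 := by linear_combination -h
    rw [hm, one_mul] at hprod
    exact hprod
  have hP2 : (1:ℂ) + a0*a1*a2*a3*a4 ≠ 0 := by
    intro h
    apply f5
    have hm : a0*a1*a2*a3*a4 = -1 := by linear_combination h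
    rw [hm] at hprod
    linear_combination -hprod
  have d1 := blockA_det_ne a0 a1 a2 a3 a4 g0 g1 g2 g3 g4 hP1
  have d2 := blockB_det_ne a0 a1 a2 a3 a4 k0 k1 k2 k3 k4 hP2
  refine (Matrix.isUnit_iff_isUnit_det _).mpr (Matrix.isUnit_det_of_right_inverse (B := (2:ℂ) • Matrix.fromBlocks
    (!![(1-a0*a1)/((1-a0)*(1-a1)), 1/(1-a1), 0, 0;
        a1/(1-a1), (1-a1*a2)/((1-a1)*(1-a2)), 1/(1-a2), 0;
        0, a2/(1-a2), (1-a2*a3)/((1-a2)*(1-a3)), 1/(1-a3);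
        0, 0, a3/(1-a3), (1-a3*a4)/((1-a3)*(1-a4))] : Matrix (Fin 4) (Fin 4) ℂ)⁻¹ 0 0
    (!![(1-a0*a1)/((1+a0)*(1+a1)), 1/(1+a1), 0, 0;
        -a1/(1+a1), (1-a1*a2)/((1+a1)*(1+a2)), 1/(1+a2), 0;
        0, -a2/(1+a2), (1-a2*a3)/((1+a2)*(1+a3)), 1/(1+a3);
        0, 0, -a3/(1+a3), (1-a3*a4)/((1+a3)*(1+a4))] : Matrix (Fin 4) (Fin 4) ℂ)⁻¹) ?_)
  rw [smul_mul_assoc, mul_smul_comm, smul_smul, Matrix.fromBlocks_multiply,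
    Matrix.mul_nonsing_inv _ (by rwa [isUnit_iff_ne_zero]),
    Matrix.mul_nonsing_inv _ (by rwa [isUnit_iff_ne_zero])]
  norm_num [Matrix.fromBlocks_one]
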